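/- arXiv:1003.4936 — 2 statements merged into one kernel-verified Lean document; each statement's English description precedes it below -/
import Mathlib

section
/- Let E be a real vector space, let C ⊆ E be a salient convex cone, and let v₁, v₂, v₃ ∈ C be linearly independent. Assume: (i) the span of {v₁, v₂} cuts out an extremal face of C, i.e. for all x, y ∈ C with x + y in the span of {v₁, v₂}, both x and y lie in the span of {v₁, v₂}; and (ii) every element x ∈ C can be written as x = α z + β v₁ with α ≥ 0, β ∈ ℝ, and z an element of C lying in the span of {v₂, v₃}. Then every element x of C lying in the span of {v₁, v₂} can be written as x = α' v₂ + β v₁ with α' ≥ 0 and β ∈ ℝ. -/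
/-- intermediate claim in the proof of Lemma 2.10 ("face2").
Let `E` be a real vector space, `C` a salient convex cone in `E`, and
`v₁, v₂, v₃ ∈ C` linearly independent.  Assume:
(i) the span of `{v₁, v₂}` cuts out an extremal face of `C`;
(ii) every `x ∈ C` can be written as `x = α • z + β • v₁` with `α ≥ 0`,
`β ∈ ℝ` and `z ∈ C` lying in `span {v₂, v₃}`.
Then every `x ∈ C` lying in `span {v₁, v₂}` can be written as
`x = α' • v₂ + β • v₁` with `α' ≥ 0`. -/
theorem stmt1
    (E : Type*) [AddCommGroup E] [Module ℝ E]
    (C : ConvexCone ℝ E)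
    (hsal : ∀ x ∈ C, -x ∈ C → x = 0)
    (v₁ v₂ v₃ : E) (hv₁ : v₁ ∈ C) (hv₂ : v₂ ∈ C) (hv₃ : v₃ ∈ C)
    (hindep : LinearIndependent ℝ ![v₁, v₂, v₃])
    (hface : ∀ x ∈ C, ∀ y ∈ C,
      x + y ∈ Submodule.span ℝ {v₁, v₂} →
      x ∈ Submodule.span ℝ {v₁, v₂} ∧ y ∈ Submodule.span ℝ {v₁, v₂})
    (hdec : ∀ x ∈ C, ∃ α β : ℝ, ∃ z ∈ C, α ≥ 0 ∧
      z ∈ Submodule.span ℝ {v₂, v₃} ∧ x = α • z + β • v₁) :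
    ∀ x ∈ C, x ∈ Submodule.span ℝ {v₁, v₂} →
      ∃ α' β : ℝ, α' ≥ 0 ∧ x = α' • v₂ + β • v₁ := by
  intro x hxC hxspan
  obtain ⟨α, β, z, hzC, hα, hzspan, hx⟩ := hdec x hxC
  rcases eq_or_lt_of_le hα with h0 | hpos
  · exact ⟨0, β, le_refl 0, by rw [hx, ← h0]; simp⟩
  · -- z ∈ span {v₁, v₂}
    have hz12 : z ∈ Submodule.span ℝ ({v₁, v₂} : Set E) := by
      have hxz : z = α⁻¹ • (x - β • v₁) := by
        rw [hx]
        match_scalars <;> field_simp <;> ring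
      rw [hxz]
      refine Submodule.smul_mem _ _ (Submodule.sub_mem _ hxspan ?_)
      exact Submodule.smul_mem _ _ (Submodule.subset_span (by simp))
    obtain ⟨a, b, hab⟩ := Submodule.mem_span_pair.mp hzspan
    obtain ⟨c, d, hcd⟩ := Submodule.mem_span_pair.mp hz12
    have heq : c • v₁ + (d - a) • v₂ + (-b) • v₃ = 0 := by
      linear_combination (norm := module) hcd - hab
    have hli := Fintype.linearIndependent_iff.mp hindep ![c, d - a, -b] (by
      simpa [Fin.sum_univ_three] using heq)
    have hc : c = 0 := hli 0
    have hb : b = 0 := by have := hli 2; simpa using this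
    have hda : d = a := by have := hli 1; simpa [sub_eq_zero] using this
    have hz : z = a • v₂ := by rw [← hab, hb]; simp
    have ha : 0 ≤ a := by
      by_contra hneg
      push_neg at hneg
      have hnegz : -z ∈ C := by
        rw [hz, ← neg_smul]
        exact C.smul_mem (by linarith) hv₂
      have hz0 := hsal z hzC hnegz
      rw [hz0] at hz
      have : v₂ ≠ 0 := by
        intro h
        exact hindep.ne_zero 1 (by simpa using h)
      have := hz.symm
      rw [smul_eq_zero] at this
      rcases this with h | h
      · exact absurd h (ne_of_lt hneg)
      · exact ‹v₂ ≠ 0› h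
    refine ⟨α * a, β, mul_nonneg (le_of_lt hpos) ha, ?_⟩
    rw [hx, hz, smul_smul]
end

section
/- Let E be a real vector space, let C ⊆ E be a salient convex cone, and let v₁, v₂, v₃ ∈ C be linearly independent. Assume: (i) the span of {v₁, v₂} cuts out an extremal face of C, i.e. for all x, y ∈ C with x + y in the span of {v₁, v₂}, both x and y lie in the span of {v₁, v₂}; and (ii) every element x ∈ C can be written as x = α z + β v₁ with α ≥ 0, β ∈ ℝ, and z an element of C lying in the span of {v₂, v₃}. Then the ray ℝ≥0·v₁ is extremal in C; that is, for all x, y ∈ C, if x + y = t v₁ for some t ≥ 0, then x and y are both nonnegative real multiples of v₁. -/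
/-- convex-geometric content of Lemma 2.10 ("face2").
Let `E` be a real vector space, `C` a salient convex cone in `E`, and
`v₁, v₂, v₃ ∈ C` linearly independent.  Assume:
(i) the span of `{v₁, v₂}` cuts out an extremal face of `C`;
(ii) every `x ∈ C` can be written as `x = α • z + β • v₁` with `α ≥ 0`,
`β ∈ ℝ` and `z ∈ C` lying in `span {v₂, v₃}`.
Then the ray `ℝ≥0 • v₁` is extremal in `C`: whenever `x, y ∈ C` and
`x + y = t • v₁` with `t ≥ 0`, both `x` and `y` are nonnegative multiples
of `v₁`. -/
theorem stmt2
    (E : Type*) [AddCommGroup E] [Module ℝ E]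
    (C : ConvexCone ℝ E)
    (hsal : ∀ x ∈ C, -x ∈ C → x = 0)
    (v₁ v₂ v₃ : E) (hv₁ : v₁ ∈ C) (hv₂ : v₂ ∈ C) (hv₃ : v₃ ∈ C)
    (hindep : LinearIndependent ℝ ![v₁, v₂, v₃])
    (hface : ∀ x ∈ C, ∀ y ∈ C,
      x + y ∈ Submodule.span ℝ {v₁, v₂} →
      x ∈ Submodule.span ℝ {v₁, v₂} ∧ y ∈ Submodule.span ℝ {v₁, v₂})
    (hdec : ∀ x ∈ C, ∃ α β : ℝ, ∃ z ∈ C, α ≥ 0 ∧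
      z ∈ Submodule.span ℝ {v₂, v₃} ∧ x = α • z + β • v₁) :
    ∀ x ∈ C, ∀ y ∈ C, ∀ t : ℝ, t ≥ 0 → x + y = t • v₁ →
      (∃ s : ℝ, s ≥ 0 ∧ x = s • v₁) ∧ (∃ s : ℝ, s ≥ 0 ∧ y = s • v₁) := by
  intro x hx y hy t ht hxy
  have key : ∀ a b c : ℝ, a • v₁ + b • v₂ + c • v₃ = 0 → a = 0 ∧ b = 0 ∧ c = 0 := by
    intro a b c h
    have h2 := Fintype.linearIndependent_iff.mp hindep ![a, b, c] (by
      simpa [Fin.sum_univ_three] using h)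
    exact ⟨h2 0, h2 1, h2 2⟩
  have hv₁ne : v₁ ≠ 0 := by
    intro h
    exact one_ne_zero ((key 1 0 0 (by simp [h])).1)
  have hv₂ne : v₂ ≠ 0 := by
    intro h
    exact one_ne_zero ((key 0 1 0 (by simp [h])).2.1)
  -- helper: if u ∈ C and u = p v₁ + q v₂ then q = 0 or q • v₂ ∈ C
  have claim : ∀ u ∈ C, ∀ p q : ℝ, p • v₁ + q • v₂ = u → q = 0 ∨ q • v₂ ∈ C := by
    intro u hu p q hpq
    obtain ⟨α, β, z, hz, hα, hzs, hdecomp⟩ := hdec u hu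
    obtain ⟨r, s, hrs⟩ := Submodule.mem_span_pair.mp hzs
    have heq : (p - β) • v₁ + (q - α * r) • v₂ + (-(α * s)) • v₃ = 0 := by
      have h0 : p • v₁ + q • v₂ = α • (r • v₂ + s • v₃) + β • v₁ := by
        rw [hrs, hpq, hdecomp]
      have h1 : p • v₁ + q • v₂ = (α * r) • v₂ + (α * s) • v₃ + β • v₁ := by
        rw [h0, smul_add, smul_smul, smul_smul]
      linear_combination (norm := module) h1
    obtain ⟨h1, h2, h3⟩ := key _ _ _ heq
    rcases eq_or_lt_of_le hα with hα0 | hαpos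
    · left
      have : q = α * r := by linarith
      rw [this, ← hα0]; ring
    · right
      have : q • v₂ = α • z := by
        have hs : α * s = 0 := by linarith
        have hq : q = α * r := by linarith
        rw [← hrs, smul_add, smul_smul, smul_smul, hs, hq, zero_smul, add_zero]
      rw [this]
      exact C.smul_mem hαpos hz
  have hspan : x + y ∈ Submodule.span ℝ ({v₁, v₂} : Set E) :=
    Submodule.mem_span_pair.mpr ⟨t, 0, by simp [hxy]⟩
  obtain ⟨hxs, hys⟩ := hface x hx y hy hspan
  obtain ⟨a, b, hab⟩ := Submodule.mem_span_pair.mp hxs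
  obtain ⟨c, d, hcd⟩ := Submodule.mem_span_pair.mp hys
  have hsum : (a + c - t) • v₁ + (b + d) • v₂ + (0 : ℝ) • v₃ = 0 := by
    have : a • v₁ + b • v₂ + (c • v₁ + d • v₂) = t • v₁ := by rw [hab, hcd, hxy]
    rw [sub_smul, add_smul, add_smul, zero_smul]
    rw [show t • v₁ = a • v₁ + b • v₂ + (c • v₁ + d • v₂) from this.symm]
    abel
  obtain ⟨hsum1, hsum2, -⟩ := key _ _ _ hsum
  have hb : b = 0 := by
    rcases claim x hx a b hab with h | hbC
    · exact h
    rcases claim y hy c d hcd with h | hdC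
    · linarith
    have hd : d = -b := by linarith
    have : b • v₂ = 0 := by
      apply hsal _ hbC
      rw [show -(b • v₂) = d • v₂ by rw [hd, neg_smul]]
      exact hdC
    by_contra hb0
    exact hv₂ne (by simpa [hb0] using (smul_eq_zero.mp this).resolve_left hb0)
  have hd : d = 0 := by linarith
  have hxa : x = a • v₁ := by rw [← hab, hb, zero_smul, add_zero]
  have hyc : y = c • v₁ := by rw [← hcd, hd, zero_smul, add_zero]
  have nonneg : ∀ e : ℝ, e • v₁ ∈ C → e ≥ 0 := by
    intro e he
    by_contra hneg
    push_neg at hneg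
    have hnegmem : -(e • v₁) ∈ C := by
      rw [← neg_smul]
      exact C.smul_mem (by linarith) hv₁
    have := hsal _ he hnegmem
    rcases smul_eq_zero.mp this with h | h
    · exact absurd h (by linarith)
    · exact hv₁ne h
  exact ⟨⟨a, nonneg a (hxa ▸ hx), hxa⟩, ⟨c, nonneg c (hyc ▸ hy), hyc⟩⟩
end
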